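/- Let (t_n,ω_n) be a sequence in Θ and (t,ω) ∈ Θ. Define x^n := (ω_n(t_n), s ↦ ω_n(s+t_n)·1_{[−t_n,0]}(s)) ∈ H and x := (ω(t), s ↦ ω(s+t)·1_{[−t,0]}(s)) ∈ H. Then [ t_n → t and |x^n − x|_B → 0 ] if and only if d_B((t_n,ω_n),(t,ω)) → 0. -/

import Mathlib

noncomputable section

open MeasureTheory Filter

/-- `ℝ^m` with the Euclidean norm. -/
abbrev Em (m : ℕ) : Type := EuclideanSpace ℝ (Fin m)

/-- The path space `Ω`. -/
abbrev PathSp (m : ℕ) (T : ℝ) : Type :=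
  {ω : C(Set.Icc (0:ℝ) T, Em m) // ∀ s : Set.Icc (0:ℝ) T, (s : ℝ) = 0 → ω s = 0}

/-- `Θ = [0,T] × Ω`. -/
abbrev ThetaSp (m : ℕ) (T : ℝ) : Type := Set.Icc (0:ℝ) T × PathSp m T

/-- Evaluation of a path at an arbitrary real time, extended by `0` outside `[0,T]`. -/
def ev {m : ℕ} {T : ℝ} (ω : PathSp m T) (r : ℝ) : Em m :=
  if h : r ∈ Set.Icc (0:ℝ) T then ω.val ⟨r, h⟩ else 0

/-- The pseudometric `d_B` on `Θ`:
`d_B((t,ω),(t',ω')) = |t−t'| + |ω(t)−ω'(t')| + |∫_0^t ω − ∫_0^{t'} ω'|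
  + (∫_0^T |∫_{(t−ρ)∨0}^t ω − ∫_{(t'−ρ)∨0}^{t'} ω'|² dρ)^{1/2}`. -/
def dBmetric {m : ℕ} {T : ℝ} (θ θ' : ThetaSp m T) : ℝ :=
  |(θ.1 : ℝ) - (θ'.1 : ℝ)| + ‖ev θ.2 (θ.1 : ℝ) - ev θ'.2 (θ'.1 : ℝ)‖ +
    ‖(∫ r in (0:ℝ)..(θ.1 : ℝ), ev θ.2 r) - ∫ r in (0:ℝ)..(θ'.1 : ℝ), ev θ'.2 r‖ +
    Real.sqrt (∫ ρ in (0:ℝ)..T,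
      ‖(∫ r in (max ((θ.1 : ℝ) - ρ) 0)..(θ.1 : ℝ), ev θ.2 r) -
        ∫ r in (max ((θ'.1 : ℝ) - ρ) 0)..(θ'.1 : ℝ), ev θ'.2 r‖ ^ 2)

/-- The `B`-norm on `H = ℝ^m × L²((−∞,0),ℝ^m)` (second component given as a plain function):
`|x|_B = ( |x_0|² + ∫_{−∞}^0 | e^s x_0 + ∫_s^0 e^{s−r} x_1(r) dr |² ds )^{1/2}`. -/
def bNorm {m : ℕ} (x0 : Em m) (x1 : ℝ → Em m) : ℝ :=
  Real.sqrt (‖x0‖ ^ 2 + ∫ s in Set.Iio (0:ℝ),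
    ‖Real.exp s • x0 + ∫ r in s..(0:ℝ), Real.exp (s - r) • x1 r‖ ^ 2)

/-- The second component of the `H`-lift of `(t,ω) ∈ Θ`: `s ↦ ω(s+t)·1_{[−t,0]}(s)`. -/
def liftSnd {m : ℕ} {T : ℝ} (t : Set.Icc (0:ℝ) T) (ω : PathSp m T) : ℝ → Em m :=
  fun s => if -(t : ℝ) ≤ s ∧ s ≤ 0 then ev ω (s + (t : ℝ)) else 0

namespace S14
open Set intervalIntegral Real

variable {m : ℕ} {T : ℝ}

/-- continuous extension of the path to all of `ℝ` via `projIcc`. -/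
def pg (hT : 0 ≤ T) (ω : PathSp m T) : ℝ → Em m :=
  fun r => ω.1 (Set.projIcc 0 T hT r)

lemma pg_cont (hT : 0 ≤ T) (ω : PathSp m T) : Continuous (pg hT ω) :=
  ω.1.continuous.comp continuous_projIcc

lemma pg_nonpos (hT : 0 ≤ T) (ω : PathSp m T) {r : ℝ} (hr : r ≤ 0) : pg hT ω r = 0 := by
  unfold pg
  rw [Set.projIcc_of_le_left _ hr]
  exact ω.2 _ rfl

lemma ev_eq (hT : 0 ≤ T) (ω : PathSp m T) :
    ev ω = (Set.Icc 0 T).indicator (pg hT ω) := by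
  funext r
  unfold ev
  by_cases h : r ∈ Set.Icc (0:ℝ) T
  · rw [dif_pos h, Set.indicator_of_mem h, pg, Set.projIcc_of_mem _ h]
  · rw [dif_neg h, Set.indicator_of_notMem h]

lemma pg_bound (hT : 0 ≤ T) (ω : PathSp m T) : ∃ M, 0 ≤ M ∧ ∀ r, ‖pg hT ω r‖ ≤ M := by
  obtain ⟨C, hC⟩ := (isCompact_range ω.1.continuous).exists_bound_of_continuousOn
    continuousOn_id
  refine ⟨max C 0, le_max_right _ _, fun r => ?_⟩
  exact le_trans (hC _ ⟨_, rfl⟩) (le_max_left _ _)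

lemma liftSnd_eq (hT : 0 ≤ T) (t : Set.Icc (0:ℝ) T) (ω : PathSp m T) :
    liftSnd t ω = (Set.Icc (-(t:ℝ)) 0).indicator (fun s => pg hT ω (s + (t:ℝ))) := by
  funext s
  unfold liftSnd
  by_cases h : -(t:ℝ) ≤ s ∧ s ≤ 0
  · have hmem : s + (t:ℝ) ∈ Set.Icc (0:ℝ) T := by
      constructor
      · linarith [h.1]
      · have := t.2.2; linarith [h.2]
    rw [if_pos h, Set.indicator_of_mem (by exact ⟨h.1, h.2⟩ : s ∈ Set.Icc (-(t:ℝ)) 0)]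
    rw [ev_eq hT ω, Set.indicator_of_mem hmem]
  · rw [if_neg h, Set.indicator_of_notMem (by simpa [Set.mem_Icc] using h)]

lemma liftSnd_bound (hT : 0 ≤ T) (t : Set.Icc (0:ℝ) T) (ω : PathSp m T) :
    ∃ M, 0 ≤ M ∧ ∀ s, ‖liftSnd t ω s‖ ≤ M := by
  obtain ⟨M, hM0, hM⟩ := pg_bound hT ω
  refine ⟨M, hM0, fun s => ?_⟩
  rw [liftSnd_eq hT]
  by_cases h : s ∈ Set.Icc (-(t:ℝ)) 0
  · rw [Set.indicator_of_mem h]; exact hM _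
  · rw [Set.indicator_of_notMem h]; simpa using hM0

lemma liftSnd_measurable (hT : 0 ≤ T) (t : Set.Icc (0:ℝ) T) (ω : PathSp m T) :
    Measurable (liftSnd t ω) := by
  rw [liftSnd_eq hT]
  exact (((pg_cont hT ω).comp (continuous_add_right _)).measurable).indicator
    measurableSet_Icc

lemma liftSnd_continuousAt (hT : 0 ≤ T) (t : Set.Icc (0:ℝ) T) (ω : PathSp m T)
    {y : ℝ} (hy : y < 0) : ContinuousAt (liftSnd t ω) y := by
  have hcont : Continuous (fun s => if -(t:ℝ) ≤ s then pg hT ω (s + (t:ℝ)) else 0) := by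
    apply Continuous.if_le ((pg_cont hT ω).comp (continuous_add_right _)) continuous_const
      continuous_const continuous_id
    intro x hx
    simp only [id] at hx
    have hx0 : x + (t:ℝ) = 0 := by linarith [hx.ge, hx.le]
    show pg hT ω (x + (t:ℝ)) = 0
    rw [hx0, pg_nonpos hT ω le_rfl]
  have hev : ∀ᶠ s in nhds y, s < 0 := Filter.Tendsto.eventually_lt_const hy tendsto_id
  have heq : (fun s => if -(t:ℝ) ≤ s then pg hT ω (s + (t:ℝ)) else 0) =ᶠ[nhds y]
      liftSnd t ω := by
    filter_upwards [hev] with s hs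
    rw [liftSnd_eq hT, Set.indicator_apply]
    simp only [Set.mem_Icc]
    by_cases h : -(t:ℝ) ≤ s
    · rw [if_pos h, if_pos ⟨h, hs.le⟩]
    · rw [if_neg h, if_neg (fun hmem => h hmem.1)]
  exact hcont.continuousAt.congr heq

lemma liftSnd_zero_of_le (hT : 0 ≤ T) (t : Set.Icc (0:ℝ) T) (ω : PathSp m T)
    {s : ℝ} (hs : s ≤ -T) : liftSnd t ω s = 0 := by
  rw [liftSnd_eq hT, Set.indicator_apply]
  split_ifs with h
  · have ht : (t:ℝ) ≤ T := t.2.2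
    have : s + (t:ℝ) = 0 := le_antisymm (by linarith [h.2]) (by linarith [h.1])
    rw [this, pg_nonpos hT ω le_rfl]
  · rfl

/-- Hypotheses on the auxiliary function `h`. -/
structure Nice (T : ℝ) {m : ℕ} (h : ℝ → Em m) : Prop where
  meas : Measurable h
  bdd : ∃ M, 0 ≤ M ∧ ∀ s, ‖h s‖ ≤ M
  cont : ∀ y < (0:ℝ), ContinuousAt h y
  supp : ∀ s ≤ -T, h s = 0

lemma Nice.ii_smul {h : ℝ → Em m} (N : Nice T h) {g : ℝ → ℝ} (hg : Continuous g)
    (a b : ℝ) : IntervalIntegrable (fun r => g r • h r) volume a b := by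
  obtain ⟨M, hM0, hM⟩ := N.bdd
  obtain ⟨C, hC⟩ := (isCompact_uIcc (a := a) (b := b)).exists_bound_of_continuousOn
    hg.continuousOn
  rw [intervalIntegrable_iff]
  have hmeas : AEStronglyMeasurable (fun r => g r • h r)
      (volume.restrict (Set.uIoc a b)) :=
    (hg.measurable.smul N.meas).aestronglyMeasurable
  refine Integrable.mono' (g := fun _ => C * M) ((integrableOn_const_iff (C := C * M)).mpr ?_) hmeas ?_
  · right; exact measure_Ioc_lt_top
  · refine (ae_restrict_iff' measurableSet_uIoc).mpr (ae_of_all _ fun r hr => ?_)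
    rw [norm_smul]
    exact mul_le_mul (by simpa using hC r (Set.uIoc_subset_uIcc hr)) (hM r)
      (norm_nonneg _) (le_trans (by simpa using norm_nonneg (g r)) (hC r
        (Set.uIoc_subset_uIcc hr)))

lemma Nice.ii {h : ℝ → Em m} (N : Nice T h) (a b : ℝ) :
    IntervalIntegrable h volume a b := by
  have := N.ii_smul continuous_const (a := a) (b := b) (g := fun _ => (1:ℝ))
  simpa using this

/-- `H(s) = ∫_s^0 h`. -/
def Hh (h : ℝ → Em m) (s : ℝ) : Em m := ∫ r in s..(0:ℝ), h r

/-- `P(s) = ∫_s^0 e^{-r} h(r) dr`. -/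
def Ph (h : ℝ → Em m) (s : ℝ) : Em m := ∫ r in s..(0:ℝ), Real.exp (-r) • h r

/-- `J(s) = ∫_s^0 e^{s-r} h(r) dr`. -/
def Jh (h : ℝ → Em m) (s : ℝ) : Em m := ∫ r in s..(0:ℝ), Real.exp (s - r) • h r

lemma Jh_eq (h : ℝ → Em m) (s : ℝ) : Jh h s = Real.exp s • Ph h s := by
  unfold Jh Ph
  rw [← intervalIntegral.integral_smul]
  congr 1
  funext r
  rw [smul_smul, ← Real.exp_add, sub_eq_add_neg]

lemma Hh_cont {h : ℝ → Em m} (N : Nice T h) : Continuous (Hh h) := by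
  have : Continuous (fun s => ∫ r in (0:ℝ)..s, h r) :=
    intervalIntegral.continuous_primitive N.ii 0
  have h2 := this.neg
  refine h2.congr fun s => ?_
  rw [Pi.neg_apply, ← intervalIntegral.integral_symm]
  rfl

lemma Ph_cont {h : ℝ → Em m} (N : Nice T h) : Continuous (Ph h) := by
  have : Continuous (fun s => ∫ r in (0:ℝ)..s, Real.exp (-r) • h r) :=
    intervalIntegral.continuous_primitive
      (N.ii_smul (Real.continuous_exp.comp continuous_neg)) 0
  have h2 := this.neg
  refine h2.congr fun s => ?_
  rw [Pi.neg_apply, ← intervalIntegral.integral_symm]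
  rfl

lemma Jh_cont {h : ℝ → Em m} (N : Nice T h) : Continuous (Jh h) := by
  have : Continuous (fun s => Real.exp s • Ph h s) :=
    Real.continuous_exp.smul (Ph_cont N)
  exact this.congr fun s => (Jh_eq h s).symm

lemma cont_expneg : Continuous (fun r : ℝ => Real.exp (-r)) := by fun_prop

lemma Hh_deriv {h : ℝ → Em m} (N : Nice T h) {y : ℝ} (hy : ContinuousAt h y) :
    HasDerivAt (Hh h) (-(h y)) y :=
  intervalIntegral.integral_hasDerivAt_left (N.ii y 0)
    N.meas.stronglyMeasurable.stronglyMeasurableAtFilter hy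

lemma Ph_deriv {h : ℝ → Em m} (N : Nice T h) {y : ℝ} (hy : ContinuousAt h y) :
    HasDerivAt (Ph h) (-(Real.exp (-y) • h y)) y :=
  intervalIntegral.integral_hasDerivAt_left
    (N.ii_smul cont_expneg y 0)
    (cont_expneg.measurable.smul
      N.meas).stronglyMeasurable.stronglyMeasurableAtFilter
    (cont_expneg.continuousAt.smul hy)

lemma Jh_deriv {h : ℝ → Em m} (N : Nice T h) {y : ℝ} (hy : ContinuousAt h y) :
    HasDerivAt (Jh h) (Jh h y - h y) y := by
  have hd : HasDerivAt (fun s => Real.exp s • Ph h s)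
      (Real.exp y • (-(Real.exp (-y) • h y)) + Real.exp y • Ph h y) y :=
    (Real.hasDerivAt_exp y).smul (Ph_deriv N hy)
  have heq : (fun s => Real.exp s • Ph h s) = Jh h := by
    funext s; rw [Jh_eq]
  rw [heq] at hd
  convert hd using 1
  rw [Jh_eq, smul_neg, smul_smul, ← Real.exp_add, add_neg_cancel, Real.exp_zero, one_smul]
  abel

/-- If a continuous function has zero derivative on `(-∞,0)` and vanishes at `0`,
it vanishes on `(-∞,0]`. -/
lemma eq_zero_aux (F : ℝ → Em m) (hc : Continuous F)
    (hd : ∀ y < (0:ℝ), HasDerivAt F 0 y) (h0 : F 0 = 0) :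
    ∀ s ≤ (0:ℝ), F s = 0 := by
  intro s hs
  have key := intervalIntegral.integral_eq_sub_of_hasDeriv_right_of_le hs
    hc.continuousOn (f' := fun _ => (0 : Em m))
    (fun y hy => (hd y hy.2).hasDerivWithinAt)
    (continuous_const.intervalIntegrable _ _)
  simp only [intervalIntegral.integral_const, smul_zero] at key
  rw [h0] at key
  exact (sub_eq_zero.mp key.symm) ▸ rfl

lemma identityA {h : ℝ → Em m} (N : Nice T h) {s : ℝ} (hs : s ≤ 0) :
    Hh h s = Jh h s + ∫ r in s..(0:ℝ), Jh h r := by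
  set F : ℝ → Em m := fun y => Hh h y - Jh h y - ∫ r in y..(0:ℝ), Jh h r with hF
  have hc : Continuous F :=
    ((Hh_cont N).sub (Jh_cont N)).sub (by
      have : Continuous (fun y => ∫ r in (0:ℝ)..y, Jh h r) :=
        intervalIntegral.continuous_primitive
          (fun a b => (Jh_cont N).intervalIntegrable a b) 0
      refine this.neg.congr fun y => ?_
      rw [Pi.neg_apply, ← intervalIntegral.integral_symm])
  have hd : ∀ y < (0:ℝ), HasDerivAt F 0 y := by
    intro y hy
    have h1 := Hh_deriv N (N.cont y hy)
    have h2 := Jh_deriv N (N.cont y hy)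
    have h3 : HasDerivAt (fun y => ∫ r in y..(0:ℝ), Jh h r) (-(Jh h y)) y :=
      intervalIntegral.integral_hasDerivAt_left
        ((Jh_cont N).intervalIntegrable y 0)
        (Jh_cont N).stronglyMeasurable.stronglyMeasurableAtFilter
        (Jh_cont N).continuousAt
    have := (h1.sub h2).sub h3
    exact this.congr_deriv (by abel)
  have h0 : F 0 = 0 := by
    simp [hF, Hh, Jh, intervalIntegral.integral_same]
  have := eq_zero_aux F hc hd h0 s hs
  have : Hh h s - Jh h s - ∫ r in s..(0:ℝ), Jh h r = 0 := this
  linear_combination (norm := module) this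

lemma identityB {h : ℝ → Em m} (N : Nice T h) {s : ℝ} (hs : s ≤ 0) :
    Jh h s = Hh h s - ∫ r in s..(0:ℝ), Real.exp (s - r) • Hh h r := by
  set F : ℝ → Em m := fun y =>
    Real.exp (-y) • (Hh h y - Jh h y) - ∫ r in y..(0:ℝ), Real.exp (-r) • Hh h r with hF
  have hHJc : Continuous (fun y => Hh h y - Jh h y) := (Hh_cont N).sub (Jh_cont N)
  have hinc : Continuous (fun r => Real.exp (-r) • Hh h r) :=
    cont_expneg.smul (Hh_cont N)
  have hc : Continuous F := by
    refine ((cont_expneg.smul hHJc).sub ?_)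
    have : Continuous (fun y => ∫ r in (0:ℝ)..y, Real.exp (-r) • Hh h r) :=
      intervalIntegral.continuous_primitive
        (fun a b => hinc.intervalIntegrable a b) 0
    refine this.neg.congr fun y => ?_
    rw [Pi.neg_apply, ← intervalIntegral.integral_symm]
  have hd : ∀ y < (0:ℝ), HasDerivAt F 0 y := by
    intro y hy
    have h1 := Hh_deriv N (N.cont y hy)
    have h2 := Jh_deriv N (N.cont y hy)
    have hHJ : HasDerivAt (fun y => Hh h y - Jh h y) (-(Jh h y)) y := by
      have := h1.sub h2
      exact this.congr_deriv (by abel)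
    have hexp : HasDerivAt (fun y : ℝ => Real.exp (-y)) (-(Real.exp (-y))) y := by
      have := (Real.hasDerivAt_exp (-y)).comp y (hasDerivAt_neg y)
      exact this.congr_deriv (by ring)
    have hterm1 : HasDerivAt (fun y => Real.exp (-y) • (Hh h y - Jh h y))
        (Real.exp (-y) • (-(Jh h y)) + (-(Real.exp (-y))) • (Hh h y - Jh h y)) y :=
      hexp.smul hHJ
    have h3 : HasDerivAt (fun y => ∫ r in y..(0:ℝ), Real.exp (-r) • Hh h r)
        (-(Real.exp (-y) • Hh h y)) y :=
      intervalIntegral.integral_hasDerivAt_left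
        (hinc.intervalIntegrable y 0)
        hinc.stronglyMeasurable.stronglyMeasurableAtFilter
        hinc.continuousAt
    have := hterm1.sub h3
    refine this.congr_deriv ?_
    simp only [smul_sub, smul_neg, neg_smul]
    abel
  have h0 : F 0 = 0 := by
    simp [hF, Hh, Jh, intervalIntegral.integral_same]
  have hFs : Real.exp (-s) • (Hh h s - Jh h s)
      = ∫ r in s..(0:ℝ), Real.exp (-r) • Hh h r := by
    have := eq_zero_aux F hc hd h0 s hs
    have h' : Real.exp (-s) • (Hh h s - Jh h s)
        - ∫ r in s..(0:ℝ), Real.exp (-r) • Hh h r = 0 := this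
    linear_combination (norm := module) h'
  have hmul := congrArg (fun v => Real.exp s • v) hFs
  simp only [smul_smul, ← Real.exp_add, add_neg_cancel, Real.exp_zero, one_smul] at hmul
  rw [← intervalIntegral.integral_smul] at hmul
  have hcong : ∀ r, Real.exp s • (Real.exp (-r) • Hh h r)
      = Real.exp (s - r) • Hh h r := by
    intro r
    rw [smul_smul, ← Real.exp_add, sub_eq_add_neg]
  simp only [hcong] at hmul
  linear_combination (norm := module) -hmul

lemma Ph_tail {h : ℝ → Em m} (N : Nice T h) {s : ℝ} (hs : s ≤ -T) :
    Ph h s = Ph h (-T) := by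
  unfold Ph
  rw [← intervalIntegral.integral_add_adjacent_intervals
    (N.ii_smul cont_expneg s (-T)) (N.ii_smul cont_expneg (-T) 0)]
  have hz : (∫ r in s..(-T), Real.exp (-r) • h r) = 0 := by
    rw [intervalIntegral.integral_congr (g := fun _ => 0) ?_]
    · simp
    · intro r hr
      rw [Set.uIcc_of_le hs] at hr
      show Real.exp (-r) • h r = 0
      rw [N.supp r hr.2, smul_zero]
  rw [hz, zero_add]

lemma Jh_tail {h : ℝ → Em m} (N : Nice T h) {s : ℝ} (hs : s ≤ -T) :
    Jh h s = Real.exp (s + T) • Jh h (-T) := by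
  rw [Jh_eq, Jh_eq, Ph_tail N hs, smul_smul, ← Real.exp_add]
  congr 2
  ring

lemma Jh_bound (hT : 0 ≤ T) {h : ℝ → Em m} {M : ℝ} (N : Nice T h)
    (hM : ∀ s, ‖h s‖ ≤ M) {s : ℝ} (hs : s ≤ 0) :
    ‖Jh h s‖ ≤ (T * Real.exp T * M) * Real.exp s := by
  have hM0 : 0 ≤ M := le_trans (norm_nonneg _) (hM 0)
  have key : ∀ u : ℝ, -T ≤ u → u ≤ 0 → ‖Ph h u‖ ≤ T * Real.exp T * M := by
    intro u hu1 hu2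
    have := intervalIntegral.norm_integral_le_of_norm_le_const
      (C := Real.exp T * M) (f := fun r => Real.exp (-r) • h r) (a := u) (b := 0) ?_
    · calc ‖Ph h u‖ ≤ Real.exp T * M * |0 - u| := this
        _ ≤ Real.exp T * M * T := by
            apply mul_le_mul_of_nonneg_left _ (by positivity)
            rw [abs_of_nonneg (by linarith)]
            linarith
        _ = T * Real.exp T * M := by ring
    · intro r hr
      rw [Set.uIoc_of_le hu2] at hr
      rw [norm_smul, Real.norm_eq_abs, abs_of_pos (Real.exp_pos _)]
      have h1 : Real.exp (-r) ≤ Real.exp T :=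
        Real.exp_le_exp.mpr (by linarith [hr.1])
      exact mul_le_mul h1 (hM r) (norm_nonneg _) (Real.exp_pos _).le
  rcases le_total s (-T) with hc | hc
  · rw [Jh_eq, norm_smul, Real.norm_eq_abs, abs_of_pos (Real.exp_pos _), Ph_tail N hc]
    calc Real.exp s * ‖Ph h (-T)‖ ≤ Real.exp s * (T * Real.exp T * M) :=
        mul_le_mul_of_nonneg_left (key (-T) le_rfl (by linarith)) (Real.exp_pos _).le
      _ = T * Real.exp T * M * Real.exp s := by ring
  · rw [Jh_eq, norm_smul, Real.norm_eq_abs, abs_of_pos (Real.exp_pos _)]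
    calc Real.exp s * ‖Ph h s‖ ≤ Real.exp s * (T * Real.exp T * M) :=
        mul_le_mul_of_nonneg_left (key s hc hs) (Real.exp_pos _).le
      _ = T * Real.exp T * M * Real.exp s := by ring

lemma integrableOn_exp2 (c : ℝ) :
    IntegrableOn (fun s => Real.exp (2*(s-c))) (Set.Iic c) := by
  have hbase : IntegrableOn (fun s => Real.exp s * Real.exp (-c)) (Set.Iic c) :=
    (integrableOn_exp_Iic c).mul_const _
  refine hbase.mono' ?_ ?_
  · exact ((Real.continuous_exp.comp (by fun_prop)).aestronglyMeasurable)
  · refine (ae_restrict_iff' measurableSet_Iic).mpr (ae_of_all _ fun s hs => ?_)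
    rw [Real.norm_eq_abs, abs_of_pos (Real.exp_pos _), ← Real.exp_add]
    exact Real.exp_le_exp.mpr (by simp only [Set.mem_Iic] at hs; linarith)

lemma integral_exp2_Iio (c : ℝ) :
    ∫ s in Set.Iio c, Real.exp (2*(s-c)) = 1/2 := by
  rw [← MeasureTheory.integral_Iic_eq_integral_Iio]
  have hderiv : ∀ x ∈ Set.Iic c, HasDerivAt (fun s => Real.exp (2*(s-c))/2)
      (Real.exp (2*(x-c))) x := by
    intro x _
    have h1 : HasDerivAt (fun s : ℝ => 2*(s-c)) 2 x := by
      simpa using ((hasDerivAt_id x).sub_const c).const_mul 2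
    have := ((Real.hasDerivAt_exp (2*(x-c))).comp x h1).div_const 2
    exact this.congr_deriv (by ring)
  have htend : Tendsto (fun s => Real.exp (2*(s-c))/2) atBot (nhds 0) := by
    have h0 : Tendsto (fun s : ℝ => 2*s) atBot atBot :=
      Tendsto.const_mul_atBot two_pos tendsto_id
    have h1 : Tendsto (fun s : ℝ => 2*(s-c)) atBot atBot :=
      (tendsto_atBot_add_const_right atBot (-(2*c)) h0).congr (fun s => by ring)
    have := (Real.tendsto_exp_atBot.comp h1).div_const 2
    simpa using this
  have := MeasureTheory.integral_Iic_of_hasDerivAt_of_tendsto' hderiv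
    (integrableOn_exp2 c) htend
  rw [this]
  norm_num

lemma intOn_sq_of_exp_bound {g : ℝ → Em m} {C : ℝ}
    (hmeas : AEStronglyMeasurable g (volume.restrict (Set.Iic 0)))
    (hbd : ∀ s ≤ (0:ℝ), ‖g s‖ ≤ C * Real.exp s) :
    IntegrableOn (fun s => ‖g s‖^2) (Set.Iic 0) := by
  have hbase : IntegrableOn (fun s => C^2 * Real.exp (2*(s-0))) (Set.Iic 0) :=
    (integrableOn_exp2 0).const_mul _
  refine (hbase.mono' ?_ ?_)
  · exact (hmeas.norm.pow 2)
  · refine (ae_restrict_iff' measurableSet_Iic).mpr (ae_of_all _ fun s hs => ?_)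
    have h1 : ‖g s‖ ≤ C * Real.exp s := hbd s hs
    have h2 : (0:ℝ) ≤ C * Real.exp s := le_trans (norm_nonneg _) h1
    rw [Real.norm_eq_abs, abs_of_nonneg (by positivity)]
    calc ‖g s‖^2 ≤ (C * Real.exp s)^2 := by
          exact pow_le_pow_left₀ (norm_nonneg _) h1 2
      _ = C^2 * Real.exp (2*(s-0)) := by
          have hx : Real.exp s ^ 2 = Real.exp (2*(s-0)) := by
            rw [← Real.exp_nat_mul]
            norm_num
          rw [mul_pow, hx]

/-- Cauchy-Schwarz for interval integrals of nonnegative continuous functions. -/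
lemma cs_interval {a b : ℝ} (hab : a ≤ b) {f g : ℝ → ℝ}
    (hf : Continuous f) (hg : Continuous g) (hf0 : ∀ x, 0 ≤ f x) (hg0 : ∀ x, 0 ≤ g x) :
    (∫ x in a..b, f x * g x)^2 ≤ (∫ x in a..b, f x^2) * (∫ x in a..b, g x^2) := by
  set μ := volume.restrict (Set.Ioc a b) with hμ
  have h2 : Real.HolderConjugate 2 2 := Real.HolderConjugate.two_two
  have hof : (ENNReal.ofReal (2:ℝ)) = 2 := by norm_num
  have hmf : MemLp f (ENNReal.ofReal (2:ℝ)) μ := by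
    rw [hof]
    exact (memLp_two_iff_integrable_sq hf.aestronglyMeasurable.restrict).mpr
      ((hf.pow 2).integrableOn_Ioc)
  have hmg : MemLp g (ENNReal.ofReal (2:ℝ)) μ := by
    rw [hof]
    exact (memLp_two_iff_integrable_sq hg.aestronglyMeasurable.restrict).mpr
      ((hg.pow 2).integrableOn_Ioc)
  have key := MeasureTheory.integral_mul_le_Lp_mul_Lq_of_nonneg h2
    (ae_of_all _ hf0) (ae_of_all _ hg0) hmf hmg
  have hA : (0:ℝ) ≤ ∫ x, f x^(2:ℝ) ∂μ :=
    integral_nonneg (fun x => Real.rpow_nonneg (hf0 x) _)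
  have hB : (0:ℝ) ≤ ∫ x, g x^(2:ℝ) ∂μ :=
    integral_nonneg (fun x => Real.rpow_nonneg (hg0 x) _)
  have hL : (0:ℝ) ≤ ∫ x, f x * g x ∂μ :=
    integral_nonneg (fun x => mul_nonneg (hf0 x) (hg0 x))
  have hsq : (∫ x, f x * g x ∂μ)^2
      ≤ ((∫ x, f x^(2:ℝ) ∂μ) ^ (1/(2:ℝ)) * (∫ x, g x^(2:ℝ) ∂μ) ^ (1/(2:ℝ)))^2 :=
    pow_le_pow_left₀ hL key 2
  have hrw : ((∫ x, f x^(2:ℝ) ∂μ) ^ (1/(2:ℝ)) * (∫ x, g x^(2:ℝ) ∂μ) ^ (1/(2:ℝ)))^2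
      = (∫ x, f x^(2:ℝ) ∂μ) * (∫ x, g x^(2:ℝ) ∂μ) := by
    rw [mul_pow, ← Real.rpow_natCast ((∫ x, f x^(2:ℝ) ∂μ) ^ (1/(2:ℝ))) 2,
      ← Real.rpow_natCast ((∫ x, g x^(2:ℝ) ∂μ) ^ (1/(2:ℝ))) 2,
      ← Real.rpow_mul hA, ← Real.rpow_mul hB]
    norm_num
  rw [hrw] at hsq
  have hjoin : ∀ (u : ℝ → ℝ), (∀ x, 0 ≤ u x) → (∫ x, u x^(2:ℝ) ∂μ) = ∫ x, u x^(2:ℕ) ∂μ := by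
    intro u hu
    refine integral_congr_ae (ae_of_all _ fun x => ?_)
    show u x ^ (2:ℝ) = u x ^ (2:ℕ)
    rw [show ((2:ℝ)) = ((2:ℕ):ℝ) by norm_num, Real.rpow_natCast]
  rw [hjoin f hf0, hjoin g hg0] at hsq
  rw [intervalIntegral.integral_of_le hab, intervalIntegral.integral_of_le hab,
    intervalIntegral.integral_of_le hab]
  exact hsq

lemma sq_norm_add_le (u v : Em m) : ‖u + v‖^2 ≤ 2*‖u‖^2 + 2*‖v‖^2 := by
  have h := norm_add_le u v
  have h2 : ‖u+v‖^2 ≤ (‖u‖+‖v‖)^2 := pow_le_pow_left₀ (norm_nonneg _) h 2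
  nlinarith [sq_nonneg (‖u‖ - ‖v‖)]

section Ineqs

variable {h : ℝ → Em m} {M : ℝ}

/-- All the integrability and convenience facts, given `hT`, `N`, `hM`. -/
lemma Jsq_int (hT : 0 ≤ T) (N : Nice T h) (hM : ∀ s, ‖h s‖ ≤ M) :
    IntegrableOn (fun s => ‖Jh h s‖^2) (Set.Iic 0) :=
  intOn_sq_of_exp_bound (Jh_cont N).aestronglyMeasurable.restrict
    (fun s hs => Jh_bound hT N hM hs)

lemma intOn_mono_Iio {f : ℝ → ℝ} (hf : IntegrableOn f (Set.Iic (0:ℝ))) :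
    IntegrableOn f (Set.Iio 0) := hf.mono_set Set.Iio_subset_Iic_self

lemma qsq_int (hT : 0 ≤ T) (N : Nice T h) (hM : ∀ s, ‖h s‖ ≤ M) (x0 : Em m) :
    IntegrableOn (fun s => ‖Real.exp s • x0 + Jh h s‖^2) (Set.Iic 0) := by
  refine intOn_sq_of_exp_bound (C := ‖x0‖ + T * Real.exp T * M)
    ((Real.continuous_exp.smul continuous_const).add (Jh_cont N)).aestronglyMeasurable.restrict
    (fun s hs => ?_)
  calc ‖Real.exp s • x0 + Jh h s‖ ≤ ‖Real.exp s • x0‖ + ‖Jh h s‖ := norm_add_le _ _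
    _ ≤ Real.exp s * ‖x0‖ + (T * Real.exp T * M) * Real.exp s := by
        rw [norm_smul, Real.norm_eq_abs, abs_of_pos (Real.exp_pos _)]
        exact add_le_add le_rfl (Jh_bound hT N hM hs)
    _ = (‖x0‖ + T * Real.exp T * M) * Real.exp s := by ring

lemma jle (hT : 0 ≤ T) (N : Nice T h) (hM : ∀ s, ‖h s‖ ≤ M) {a : ℝ} (ha : a ≤ 0) :
    (∫ x in a..(0:ℝ), ‖Jh h x‖^2) ≤ ∫ s in Set.Iio (0:ℝ), ‖Jh h s‖^2 := by
  rw [intervalIntegral.integral_of_le ha, ← MeasureTheory.integral_Iic_eq_integral_Iio]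
  exact setIntegral_mono_set (Jsq_int hT N hM)
    (ae_of_all _ (fun s => sq_nonneg _))
    (HasSubset.Subset.eventuallyLE Set.Ioc_subset_Iic_self)

lemma j_nonneg : 0 ≤ ∫ s in Set.Iio (0:ℝ), ‖Jh h s‖^2 :=
  setIntegral_nonneg measurableSet_Iio (fun s _ => sq_nonneg _)

lemma q_nonneg (x0 : Em m) : 0 ≤ ∫ s in Set.Iio (0:ℝ), ‖Real.exp s • x0 + Jh h s‖^2 :=
  setIntegral_nonneg measurableSet_Iio (fun s _ => sq_nonneg _)

lemma d_nonneg (hT : 0 ≤ T) : 0 ≤ ∫ s in (-T)..(0:ℝ), ‖Hh h s‖^2 :=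
  intervalIntegral.integral_nonneg (by linarith) (fun s _ => sq_nonneg _)

lemma exp_sq_integral (x0 : Em m) :
    ∫ s in Set.Iio (0:ℝ), 2*(Real.exp (2*(s-0)) * ‖x0‖^2) = ‖x0‖^2 := by
  rw [MeasureTheory.integral_const_mul, MeasureTheory.integral_mul_const,
    integral_exp2_Iio 0]
  ring

lemma exp_smul_sq (x0 : Em m) (s : ℝ) :
    ‖Real.exp s • x0‖^2 = Real.exp (2*(s-0)) * ‖x0‖^2 := by
  rw [norm_smul, Real.norm_eq_abs, abs_of_pos (Real.exp_pos _), mul_pow,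
    ← Real.exp_nat_mul]
  norm_num

lemma ineq1 (hT : 0 ≤ T) (N : Nice T h) (hM : ∀ s, ‖h s‖ ≤ M) (x0 : Em m) :
    (∫ s in Set.Iio (0:ℝ), ‖Real.exp s • x0 + Jh h s‖^2)
      ≤ ‖x0‖^2 + 2 * ∫ s in Set.Iio (0:ℝ), ‖Jh h s‖^2 := by
  have hrhs : IntegrableOn
      (fun s => 2*(Real.exp (2*(s-0)) * ‖x0‖^2) + 2*‖Jh h s‖^2) (Set.Iio 0) := by
    exact Integrable.add
      (intOn_mono_Iio (((integrableOn_exp2 0).mul_const _).const_mul 2))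
      (intOn_mono_Iio ((Jsq_int hT N hM).const_mul 2))
  have hmono := setIntegral_mono_on
    (intOn_mono_Iio (qsq_int hT N hM x0)) hrhs
    measurableSet_Iio (fun s _ => by
      calc ‖Real.exp s • x0 + Jh h s‖^2
          ≤ 2*‖Real.exp s • x0‖^2 + 2*‖Jh h s‖^2 := sq_norm_add_le _ _
        _ = 2*(Real.exp (2*(s-0)) * ‖x0‖^2) + 2*‖Jh h s‖^2 := by
            rw [exp_smul_sq])
  calc (∫ s in Set.Iio (0:ℝ), ‖Real.exp s • x0 + Jh h s‖^2)
      ≤ ∫ s in Set.Iio (0:ℝ), (2*(Real.exp (2*(s-0)) * ‖x0‖^2) + 2*‖Jh h s‖^2) := hmono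
    _ = ‖x0‖^2 + 2 * ∫ s in Set.Iio (0:ℝ), ‖Jh h s‖^2 := by
        rw [MeasureTheory.integral_add
            (intOn_mono_Iio (((integrableOn_exp2 0).mul_const _).const_mul 2))
            (intOn_mono_Iio ((Jsq_int hT N hM).const_mul 2)),
          exp_sq_integral, MeasureTheory.integral_const_mul]

lemma ineq2 (hT : 0 ≤ T) (N : Nice T h) (hM : ∀ s, ‖h s‖ ≤ M) (x0 : Em m) :
    (∫ s in Set.Iio (0:ℝ), ‖Jh h s‖^2)
      ≤ ‖x0‖^2 + 2 * ∫ s in Set.Iio (0:ℝ), ‖Real.exp s • x0 + Jh h s‖^2 := by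
  have hrhs : IntegrableOn
      (fun s => 2*(Real.exp (2*(s-0)) * ‖x0‖^2) + 2*‖Real.exp s • x0 + Jh h s‖^2)
      (Set.Iio 0) := by
    exact Integrable.add
      (intOn_mono_Iio (((integrableOn_exp2 0).mul_const _).const_mul 2))
      (intOn_mono_Iio ((qsq_int hT N hM x0).const_mul 2))
  have hmono := setIntegral_mono_on
    (intOn_mono_Iio (Jsq_int hT N hM)) hrhs
    measurableSet_Iio (fun s _ => by
      have := sq_norm_add_le (-(Real.exp s • x0)) (Real.exp s • x0 + Jh h s)
      rw [neg_add_cancel_left, norm_neg, exp_smul_sq] at this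
      linarith)
  calc (∫ s in Set.Iio (0:ℝ), ‖Jh h s‖^2)
      ≤ ∫ s in Set.Iio (0:ℝ),
          (2*(Real.exp (2*(s-0)) * ‖x0‖^2) + 2*‖Real.exp s • x0 + Jh h s‖^2) := hmono
    _ = ‖x0‖^2 + 2 * ∫ s in Set.Iio (0:ℝ), ‖Real.exp s • x0 + Jh h s‖^2 := by
        rw [MeasureTheory.integral_add
            (intOn_mono_Iio (((integrableOn_exp2 0).mul_const _).const_mul 2))
            (intOn_mono_Iio ((qsq_int hT N hM x0).const_mul 2)),
          exp_sq_integral, MeasureTheory.integral_const_mul]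

lemma j_split (hT : 0 ≤ T) (N : Nice T h) (hM : ∀ s, ‖h s‖ ≤ M) :
    ∫ s in Set.Iio (0:ℝ), ‖Jh h s‖^2
      = (1/2)*‖Jh h (-T)‖^2 + ∫ x in (-T)..(0:ℝ), ‖Jh h x‖^2 := by
  have hsub1 : Set.Iio (-T) ⊆ Set.Iic (0:ℝ) := by
    intro x hx
    have h1 : x < -T := hx
    exact le_of_lt (lt_of_lt_of_le h1 (by linarith))
  have hsub2 : Set.Ico (-T) (0:ℝ) ⊆ Set.Iic (0:ℝ) := fun x hx => hx.2.le
  have hdisj : Disjoint (Set.Iio (-T)) (Set.Ico (-T) (0:ℝ)) :=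
    Set.disjoint_left.mpr (fun x hx hx2 => absurd hx2.1 (not_le.mpr hx))
  have hunion : Set.Iio (-T) ∪ Set.Ico (-T) (0:ℝ) = Set.Iio 0 :=
    Set.Iio_union_Ico_eq_Iio (by linarith)
  rw [← hunion, setIntegral_union hdisj measurableSet_Ico
    ((Jsq_int hT N hM).mono_set hsub1) ((Jsq_int hT N hM).mono_set hsub2)]
  congr 1
  · have hcongr : ∀ s ∈ Set.Iio (-T),
        ‖Jh h s‖^2 = Real.exp (2*(s-(-T))) * ‖Jh h (-T)‖^2 := by
      intro s hs
      rw [Jh_tail N (le_of_lt hs), norm_smul, Real.norm_eq_abs,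
        abs_of_pos (Real.exp_pos _), mul_pow, ← Real.exp_nat_mul]
      norm_num
    rw [setIntegral_congr_fun measurableSet_Iio hcongr,
      MeasureTheory.integral_mul_const, integral_exp2_Iio (-T)]
  · rw [setIntegral_congr_set Ico_ae_eq_Ioc, ← intervalIntegral.integral_of_le (by linarith)]

lemma jnorm_sq_le (hT : 0 ≤ T) (N : Nice T h) (hM : ∀ s, ‖h s‖ ≤ M) :
    ‖Jh h (-T)‖^2 ≤ 2 * ∫ s in Set.Iio (0:ℝ), ‖Jh h s‖^2 := by
  have hs := j_split hT N hM
  have hnn : 0 ≤ ∫ x in (-T)..(0:ℝ), ‖Jh h x‖^2 :=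
    intervalIntegral.integral_nonneg (by linarith) (fun x _ => sq_nonneg _)
  linarith

lemma ineq_c (hT : 0 ≤ T) (N : Nice T h) (hM : ∀ s, ‖h s‖ ≤ M) :
    ‖Hh h (-T)‖^2 ≤ (4+2*T) * ∫ s in Set.Iio (0:ℝ), ‖Jh h s‖^2 := by
  set j := ∫ s in Set.Iio (0:ℝ), ‖Jh h s‖^2 with hj
  have hj0 : 0 ≤ j := j_nonneg
  have hA := identityA N (s := -T) (by linarith)
  set a1 := ‖Jh h (-T)‖ with ha1
  set a2 := ∫ x in (-T)..(0:ℝ), ‖Jh h x‖ with ha2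
  have ha20 : 0 ≤ a2 := intervalIntegral.integral_nonneg (by linarith)
    (fun x _ => norm_nonneg _)
  have hc : ‖Hh h (-T)‖ ≤ a1 + a2 := by
    rw [hA]
    refine le_trans (norm_add_le _ _) (add_le_add le_rfl ?_)
    exact intervalIntegral.norm_integral_le_integral_norm (by linarith)
  have hcs : a2^2 ≤ T * j := by
    have h1 : a2 = ∫ x in (-T)..(0:ℝ), ‖Jh h x‖ * 1 := by simp [ha2]
    have h2 := cs_interval (a := -T) (b := 0) (by linarith)
      ((Jh_cont N).norm) continuous_const (fun x => norm_nonneg _) (fun _ => zero_le_one)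
    rw [← h1] at h2
    have h3 : (∫ x in (-T)..(0:ℝ), ‖Jh h x‖^2) ≤ j := jle hT N hM (by linarith)
    have h4 : (∫ x in (-T)..(0:ℝ), (1:ℝ)^2) = T := by simp
    have h5 : 0 ≤ ∫ x in (-T)..(0:ℝ), ‖Jh h x‖^2 :=
      intervalIntegral.integral_nonneg (by linarith) (fun x _ => sq_nonneg _)
    calc a2^2 ≤ (∫ x in (-T)..(0:ℝ), ‖Jh h x‖^2) * (∫ x in (-T)..(0:ℝ), (1:ℝ)^2) := h2
      _ = (∫ x in (-T)..(0:ℝ), ‖Jh h x‖^2) * T := by rw [h4]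
      _ ≤ j * T := mul_le_mul_of_nonneg_right h3 hT
      _ = T * j := by ring
  have hje := jnorm_sq_le hT N hM
  have h6 : ‖Hh h (-T)‖^2 ≤ (a1 + a2)^2 :=
    pow_le_pow_left₀ (norm_nonneg _) hc 2
  have h7 : (a1+a2)^2 ≤ 2*a1^2 + 2*a2^2 := by nlinarith [sq_nonneg (a1 - a2)]
  rw [← hj] at hje
  nlinarith

lemma ineq_d (hT : 0 ≤ T) (N : Nice T h) (hM : ∀ s, ‖h s‖ ≤ M) :
    (∫ s in (-T)..(0:ℝ), ‖Hh h s‖^2)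
      ≤ (2+2*T^2) * ∫ s in Set.Iio (0:ℝ), ‖Jh h s‖^2 := by
  set j := ∫ s in Set.Iio (0:ℝ), ‖Jh h s‖^2 with hj
  have hj0 : 0 ≤ j := j_nonneg
  have hpt : ∀ s ∈ Set.Icc (-T) (0:ℝ), ‖Hh h s‖^2 ≤ 2*‖Jh h s‖^2 + 2*(T*j) := by
    intro s hs
    have hA := identityA N hs.2
    set a2 := ∫ x in s..(0:ℝ), ‖Jh h x‖ with ha2
    have ha20 : 0 ≤ a2 := intervalIntegral.integral_nonneg hs.2 (fun x _ => norm_nonneg _)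
    have hc : ‖Hh h s‖ ≤ ‖Jh h s‖ + a2 := by
      rw [hA]
      exact le_trans (norm_add_le _ _) (add_le_add le_rfl
        (intervalIntegral.norm_integral_le_integral_norm hs.2))
    have hcs : a2^2 ≤ T * j := by
      have h1 : a2 = ∫ x in s..(0:ℝ), ‖Jh h x‖ * 1 := by simp [ha2]
      have h2 := cs_interval (a := s) (b := 0) hs.2
        ((Jh_cont N).norm) continuous_const (fun x => norm_nonneg _) (fun _ => zero_le_one)
      rw [← h1] at h2
      have h3 : (∫ x in s..(0:ℝ), ‖Jh h x‖^2) ≤ j := jle hT N hM hs.2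
      have h4 : (∫ x in s..(0:ℝ), (1:ℝ)^2) = -s := by simp
      have h5 : 0 ≤ ∫ x in s..(0:ℝ), ‖Jh h x‖^2 :=
        intervalIntegral.integral_nonneg hs.2 (fun x _ => sq_nonneg _)
      calc a2^2 ≤ (∫ x in s..(0:ℝ), ‖Jh h x‖^2) * (∫ x in s..(0:ℝ), (1:ℝ)^2) := h2
        _ = (∫ x in s..(0:ℝ), ‖Jh h x‖^2) * (-s) := by rw [h4]
        _ ≤ j * T := mul_le_mul h3 (by linarith [hs.1]) (by linarith [hs.2]) hj0
        _ = T * j := by ring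
    nlinarith [pow_le_pow_left₀ (norm_nonneg (Hh h s)) hc 2, sq_nonneg (‖Jh h s‖ - a2)]
  have hint1 : IntervalIntegrable (fun s => ‖Hh h s‖^2) MeasureTheory.volume (-T) 0 :=
    (((Hh_cont N).norm).pow 2).intervalIntegrable _ _
  have hint2 : IntervalIntegrable (fun s => 2*‖Jh h s‖^2 + 2*(T*j)) MeasureTheory.volume (-T) 0 :=
    ((continuous_const.mul (((Jh_cont N).norm).pow 2)).add continuous_const).intervalIntegrable _ _
  have hmono := intervalIntegral.integral_mono_on (by linarith : (-T) ≤ (0:ℝ))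
    hint1 hint2 hpt
  have hsplit : (∫ s in (-T)..(0:ℝ), (2*‖Jh h s‖^2 + 2*(T*j)))
      = 2*(∫ s in (-T)..(0:ℝ), ‖Jh h s‖^2) + T*(2*(T*j)) := by
    rw [intervalIntegral.integral_add (f := fun s => 2*‖Jh h s‖^2) (g := fun _ => 2*(T*j))
      ((continuous_const.mul (((Jh_cont N).norm).pow 2)).intervalIntegrable _ _)
      (continuous_const.intervalIntegrable _ _),
      intervalIntegral.integral_const_mul, intervalIntegral.integral_const,
      smul_eq_mul]
    ring
  have h3 : (∫ x in (-T)..(0:ℝ), ‖Jh h x‖^2) ≤ j := jle hT N hM (by linarith)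
  calc (∫ s in (-T)..(0:ℝ), ‖Hh h s‖^2)
      ≤ ∫ s in (-T)..(0:ℝ), (2*‖Jh h s‖^2 + 2*(T*j)) := hmono
    _ = 2*(∫ s in (-T)..(0:ℝ), ‖Jh h s‖^2) + T*(2*(T*j)) := hsplit
    _ ≤ 2*j + T*(2*(T*j)) := by nlinarith
    _ = (2+2*T^2) * j := by ring

lemma ineq_j (hT : 0 ≤ T) (N : Nice T h) (hM : ∀ s, ‖h s‖ ≤ M) :
    (∫ s in Set.Iio (0:ℝ), ‖Jh h s‖^2)
      ≤ (2+T+2*T^2) * (∫ s in (-T)..(0:ℝ), ‖Hh h s‖^2) + ‖Hh h (-T)‖^2 := by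
  set d := ∫ s in (-T)..(0:ℝ), ‖Hh h s‖^2 with hd
  have hd0 : 0 ≤ d := d_nonneg hT
  have hHsq_int : IntervalIntegrable (fun s => ‖Hh h s‖^2) MeasureTheory.volume (-T) 0 :=
    (((Hh_cont N).norm).pow 2).intervalIntegrable _ _
  have hpt : ∀ s ∈ Set.Icc (-T) (0:ℝ), ‖Jh h s‖^2 ≤ 2*‖Hh h s‖^2 + 2*(T*d) := by
    intro s hs
    have hB := identityB N hs.2
    set K := ∫ r in s..(0:ℝ), Real.exp (s - r) • Hh h r with hK
    have hKn : ‖K‖ ≤ ∫ r in s..(0:ℝ), ‖Hh h r‖ * Real.exp (s - r) := by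
      refine le_trans (intervalIntegral.norm_integral_le_integral_norm hs.2) ?_
      refine le_of_eq (intervalIntegral.integral_congr fun r _ => ?_)
      rw [norm_smul, Real.norm_eq_abs, abs_of_pos (Real.exp_pos _), mul_comm]
    have hKn0 : 0 ≤ ∫ r in s..(0:ℝ), ‖Hh h r‖ * Real.exp (s - r) :=
      intervalIntegral.integral_nonneg hs.2
        (fun r _ => mul_nonneg (norm_nonneg _) (Real.exp_pos _).le)
    have hcs := cs_interval (a := s) (b := 0) hs.2 (f := fun x => ‖Hh h x‖)
      (g := fun r => Real.exp (s - r)) ((Hh_cont N).norm)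
      (by fun_prop) (fun x => norm_nonneg _) (fun x => (Real.exp_pos _).le)
    have hg2 : (∫ r in s..(0:ℝ), (Real.exp (s - r))^2) ≤ T := by
      have hle : ∀ r ∈ Set.Icc s (0:ℝ), (Real.exp (s - r))^2 ≤ 1 := by
        intro r hr
        have : Real.exp (s - r) ≤ 1 := Real.exp_le_one_iff.mpr (by linarith [hr.1])
        nlinarith [(Real.exp_pos (s-r)).le]
      calc (∫ r in s..(0:ℝ), (Real.exp (s - r))^2)
          ≤ ∫ r in s..(0:ℝ), (1:ℝ) := intervalIntegral.integral_mono_on hs.2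
            ((by fun_prop : Continuous (fun r => (Real.exp (s - r))^2)
              ).intervalIntegrable _ _)
            (continuous_const.intervalIntegrable _ _) hle
        _ = -s := by simp
        _ ≤ T := by linarith [hs.1]
    have hf2 : (∫ r in s..(0:ℝ), ‖Hh h r‖^2) ≤ d := by
      rw [hd]
      exact intervalIntegral.integral_mono_interval hs.1 hs.2 le_rfl
        (ae_of_all _ (fun r => sq_nonneg _)) hHsq_int
    have hf20 : 0 ≤ ∫ r in s..(0:ℝ), ‖Hh h r‖^2 :=
      intervalIntegral.integral_nonneg hs.2 (fun r _ => sq_nonneg _)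
    have hK2 : ‖K‖^2 ≤ T * d := by
      calc ‖K‖^2 ≤ (∫ r in s..(0:ℝ), ‖Hh h r‖ * Real.exp (s - r))^2 :=
            pow_le_pow_left₀ (norm_nonneg _) hKn 2
        _ ≤ (∫ r in s..(0:ℝ), ‖Hh h r‖^2) * (∫ r in s..(0:ℝ), (Real.exp (s - r))^2) := hcs
        _ ≤ d * T := mul_le_mul hf2 hg2 (by
              refine intervalIntegral.integral_nonneg hs.2 (fun r _ => sq_nonneg _)) hd0
        _ = T * d := by ring
    have hJle : ‖Jh h s‖ ≤ ‖Hh h s‖ + ‖K‖ := by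
      rw [hB]
      exact norm_sub_le _ _
    nlinarith [pow_le_pow_left₀ (norm_nonneg (Jh h s)) hJle 2,
      sq_nonneg (‖Hh h s‖ - ‖K‖), norm_nonneg K, norm_nonneg (Hh h s)]
  have hint2 : IntervalIntegrable (fun s => 2*‖Hh h s‖^2 + 2*(T*d)) MeasureTheory.volume (-T) 0 :=
    ((continuous_const.mul (((Hh_cont N).norm).pow 2)).add continuous_const).intervalIntegrable _ _
  have hmono := intervalIntegral.integral_mono_on (by linarith : (-T) ≤ (0:ℝ))
    (f := fun s => ‖Jh h s‖^2) ((((Jh_cont N).norm).pow 2).intervalIntegrable _ _) hint2 hpt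
  have hsplit : (∫ s in (-T)..(0:ℝ), (2*‖Hh h s‖^2 + 2*(T*d)))
      = 2*d + T*(2*(T*d)) := by
    rw [intervalIntegral.integral_add (f := fun s => 2*‖Hh h s‖^2) (g := fun _ => 2*(T*d))
      ((continuous_const.mul (((Hh_cont N).norm).pow 2)).intervalIntegrable _ _)
      (continuous_const.intervalIntegrable _ _),
      intervalIntegral.integral_const_mul, intervalIntegral.integral_const,
      smul_eq_mul]
    ring
  have hJT : ‖Jh h (-T)‖^2 ≤ 2*‖Hh h (-T)‖^2 + 2*(T*d) :=
    hpt (-T) ⟨le_rfl, by linarith⟩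
  have hsp := j_split hT N hM
  calc (∫ s in Set.Iio (0:ℝ), ‖Jh h s‖^2)
      = (1/2)*‖Jh h (-T)‖^2 + ∫ x in (-T)..(0:ℝ), ‖Jh h x‖^2 := hsp
    _ ≤ (1/2)*(2*‖Hh h (-T)‖^2 + 2*(T*d)) + (2*d + T*(2*(T*d))) := by
        have := le_trans hmono (le_of_eq hsplit)
        nlinarith
    _ ≤ (2+T+2*T^2) * d + ‖Hh h (-T)‖^2 := by nlinarith

end Ineqs

lemma ii_of_bdd {g : ℝ → Em m} (hmeas : Measurable g) {M : ℝ}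
    (hM : ∀ s, ‖g s‖ ≤ M) (a b : ℝ) : IntervalIntegrable g MeasureTheory.volume a b := by
  rw [intervalIntegrable_iff]
  refine Integrable.mono' (g := fun _ => M) ((integrableOn_const_iff (C := M)).mpr ?_)
    hmeas.aestronglyMeasurable.restrict (ae_of_all _ fun r => hM r)
  right; exact measure_Ioc_lt_top

lemma liftSnd_ii (hT : 0 ≤ T) (t : Set.Icc (0:ℝ) T) (ω : PathSp m T) (a b : ℝ) :
    IntervalIntegrable (liftSnd t ω) MeasureTheory.volume a b := by
  obtain ⟨M, _, hM⟩ := liftSnd_bound hT t ω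
  exact ii_of_bdd (liftSnd_measurable hT t ω) hM a b

/-- Change of variables: the integral of `liftSnd` over `[-ρ,0]` is the integral of `ev`
over `[(t-ρ) ∨ 0, t]`. -/
lemma cov (hT : 0 ≤ T) (t : Set.Icc (0:ℝ) T) (ω : PathSp m T) {ρ : ℝ}
    (hρ1 : 0 ≤ ρ) (hρ2 : ρ ≤ T) :
    ∫ r in (-ρ)..(0:ℝ), liftSnd t ω r
      = ∫ u in (max ((t:ℝ) - ρ) 0)..((t:ℝ)), ev ω u := by
  have ht0 : (0:ℝ) ≤ (t:ℝ) := t.2.1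
  have htT : (t:ℝ) ≤ T := t.2.2
  set G : ℝ → Em m := (Set.Icc (0:ℝ) ((t:ℝ))).indicator (pg hT ω) with hG
  have hGmeas : Measurable G := (pg_cont hT ω).measurable.indicator measurableSet_Icc
  obtain ⟨M, hM0, hMp⟩ := pg_bound hT ω
  have hGbd : ∀ s, ‖G s‖ ≤ M := by
    intro s
    rw [hG, Set.indicator_apply]
    split_ifs
    · exact hMp s
    · simpa using hM0
  have hGii := ii_of_bdd hGmeas hGbd
  have step1 : (∫ r in (-ρ)..(0:ℝ), liftSnd t ω r)
      = ∫ x in ((t:ℝ) - ρ)..((t:ℝ)), liftSnd t ω (x - (t:ℝ)) := by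
    rw [intervalIntegral.integral_comp_sub_right (fun r => liftSnd t ω r) ((t:ℝ))]
    congr 1 <;> ring
  have step2 : ∀ x, liftSnd t ω (x - (t:ℝ)) = G x := by
    intro x
    unfold liftSnd
    rw [hG, Set.indicator_apply]
    by_cases hx : x ∈ Set.Icc (0:ℝ) ((t:ℝ))
    · rw [if_pos (by constructor <;> [linarith [hx.1]; linarith [hx.2]]), if_pos hx]
      have hxT : x ∈ Set.Icc (0:ℝ) T := ⟨hx.1, le_trans hx.2 htT⟩
      have : x - (t:ℝ) + (t:ℝ) = x := by ring
      rw [this, ev_eq hT ω, Set.indicator_of_mem hxT]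
    · rw [if_neg (by
        intro hcond
        exact hx ⟨by linarith [hcond.1], by linarith [hcond.2]⟩), if_neg hx]
  have step3 : (∫ x in ((t:ℝ) - ρ)..((t:ℝ)), liftSnd t ω (x - (t:ℝ)))
      = ∫ x in ((t:ℝ) - ρ)..((t:ℝ)), G x :=
    intervalIntegral.integral_congr (fun x _ => step2 x)
  have hsplit : (∫ x in ((t:ℝ) - ρ)..((t:ℝ)), G x)
      = (∫ x in ((t:ℝ) - ρ)..(max ((t:ℝ) - ρ) 0), G x)
        + ∫ x in (max ((t:ℝ) - ρ) 0)..((t:ℝ)), G x := by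
    rw [intervalIntegral.integral_add_adjacent_intervals (hGii _ _) (hGii _ _)]
  have hpart1 : (∫ x in ((t:ℝ) - ρ)..(max ((t:ℝ) - ρ) 0), G x) = 0 := by
    rcases le_total (0:ℝ) ((t:ℝ) - ρ) with hc | hc
    · rw [max_eq_left hc, intervalIntegral.integral_same]
    · rw [max_eq_right hc]
      have : ∀ x ∈ Set.uIcc ((t:ℝ) - ρ) (0:ℝ), G x = 0 := by
        intro x hx
        rw [Set.uIcc_of_le hc] at hx
        rw [hG, Set.indicator_apply]
        split_ifs with hmem
        · have hx0 : x = 0 := le_antisymm hx.2 hmem.1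
          rw [hx0, pg_nonpos hT ω le_rfl]
        · rfl
      rw [intervalIntegral.integral_congr this]
      simp
  have hpart2 : (∫ x in (max ((t:ℝ) - ρ) 0)..((t:ℝ)), G x)
      = ∫ u in (max ((t:ℝ) - ρ) 0)..((t:ℝ)), ev ω u := by
    refine intervalIntegral.integral_congr (fun x hx => ?_)
    have hmax : max ((t:ℝ) - ρ) 0 ≤ (t:ℝ) := max_le (by linarith) ht0
    rw [Set.uIcc_of_le hmax] at hx
    have hx1 : 0 ≤ x := le_trans (le_max_right _ _) hx.1
    have hx2 : x ≤ (t:ℝ) := hx.2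
    rw [hG, Set.indicator_of_mem (Set.mem_Icc.mpr ⟨hx1, hx2⟩), ev_eq hT ω,
      Set.indicator_of_mem (Set.mem_Icc.mpr ⟨hx1, le_trans hx2 htT⟩)]
  rw [step1, step3, hsplit, hpart1, hpart2, zero_add]

lemma nice_hfun (hT : 0 ≤ T) (t1 t2 : Set.Icc (0:ℝ) T) (ω1 ω2 : PathSp m T) :
    Nice T (fun s => liftSnd t1 ω1 s - liftSnd t2 ω2 s) := by
  obtain ⟨M1, hM10, hM1⟩ := liftSnd_bound hT t1 ω1
  obtain ⟨M2, hM20, hM2⟩ := liftSnd_bound hT t2 ω2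
  refine ⟨(liftSnd_measurable hT t1 ω1).sub (liftSnd_measurable hT t2 ω2),
    ⟨M1 + M2, by linarith, fun s => le_trans (norm_sub_le _ _) (add_le_add (hM1 s) (hM2 s))⟩,
    fun y hy => ((liftSnd_continuousAt hT t1 ω1 hy).sub (liftSnd_continuousAt hT t2 ω2 hy)),
    fun s hs => by rw [liftSnd_zero_of_le hT t1 ω1 hs, liftSnd_zero_of_le hT t2 ω2 hs, sub_zero]⟩

lemma Hh_hfun (hT : 0 ≤ T) (t1 t2 : Set.Icc (0:ℝ) T) (ω1 ω2 : PathSp m T)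
    {ρ : ℝ} (hρ1 : 0 ≤ ρ) (hρ2 : ρ ≤ T) :
    Hh (fun s => liftSnd t1 ω1 s - liftSnd t2 ω2 s) (-ρ)
      = (∫ u in (max ((t1:ℝ) - ρ) 0)..((t1:ℝ)), ev ω1 u)
        - ∫ u in (max ((t2:ℝ) - ρ) 0)..((t2:ℝ)), ev ω2 u := by
  unfold Hh
  rw [intervalIntegral.integral_sub (liftSnd_ii hT t1 ω1 _ _) (liftSnd_ii hT t2 ω2 _ _),
    cov hT t1 ω1 hρ1 hρ2, cov hT t2 ω2 hρ1 hρ2]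

lemma dB_expand (hT : 0 ≤ T) (t1 t2 : Set.Icc (0:ℝ) T) (ω1 ω2 : PathSp m T) :
    dBmetric (m := m) (T := T) (t1, ω1) (t2, ω2)
      = |(t1:ℝ) - (t2:ℝ)| + ‖ev ω1 (t1:ℝ) - ev ω2 (t2:ℝ)‖
        + ‖Hh (fun s => liftSnd t1 ω1 s - liftSnd t2 ω2 s) (-T)‖
        + Real.sqrt (∫ s in (-T)..(0:ℝ),
            ‖Hh (fun s => liftSnd t1 ω1 s - liftSnd t2 ω2 s) s‖^2) := by
  unfold dBmetric
  have hterm3 : (∫ r in (0:ℝ)..((t1:ℝ)), ev ω1 r) - (∫ r in (0:ℝ)..((t2:ℝ)), ev ω2 r)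
      = Hh (fun s => liftSnd t1 ω1 s - liftSnd t2 ω2 s) (-T) := by
    rw [Hh_hfun hT t1 t2 ω1 ω2 hT le_rfl,
      max_eq_right (by linarith [t1.2.2] : (t1:ℝ) - T ≤ 0),
      max_eq_right (by linarith [t2.2.2] : (t2:ℝ) - T ≤ 0)]
  have hterm4 : (∫ ρ in (0:ℝ)..T,
      ‖(∫ r in (max ((t1:ℝ) - ρ) 0)..((t1:ℝ)), ev ω1 r)
        - ∫ r in (max ((t2:ℝ) - ρ) 0)..((t2:ℝ)), ev ω2 r‖ ^ 2)
      = ∫ s in (-T)..(0:ℝ),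
          ‖Hh (fun s => liftSnd t1 ω1 s - liftSnd t2 ω2 s) s‖^2 := by
    have hcongr : ∀ ρ ∈ Set.uIcc (0:ℝ) T,
        ‖(∫ r in (max ((t1:ℝ) - ρ) 0)..((t1:ℝ)), ev ω1 r)
          - ∫ r in (max ((t2:ℝ) - ρ) 0)..((t2:ℝ)), ev ω2 r‖ ^ 2
        = (fun s => ‖Hh (fun s => liftSnd t1 ω1 s - liftSnd t2 ω2 s) s‖^2) (-ρ) := by
      intro ρ hρ
      rw [Set.uIcc_of_le hT] at hρ
      simp only
      rw [Hh_hfun hT t1 t2 ω1 ω2 hρ.1 hρ.2]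
    rw [intervalIntegral.integral_congr hcongr,
      intervalIntegral.integral_comp_neg
        (fun s => ‖Hh (fun s => liftSnd t1 ω1 s - liftSnd t2 ω2 s) s‖^2), neg_zero]
  rw [hterm3, hterm4]

lemma bNorm_eq (x0 : Em m) (h : ℝ → Em m) :
    bNorm x0 h = Real.sqrt (‖x0‖^2
      + ∫ s in Set.Iio (0:ℝ), ‖Real.exp s • x0 + Jh h s‖^2) := rfl

end S14

/-- STATEMENT 14: with `x^n = (ω_n(t_n), ω_n(·+t_n)1_{[−t_n,0]})` and
`x = (ω(t), ω(·+t)1_{[−t,0]})`, one has `t_n → t` and `|x^n − x|_B → 0` if and only if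
`d_B((t_n,ω_n),(t,ω)) → 0`. -/
theorem stmt14 (m : ℕ) (hm : 1 ≤ m) (T : ℝ) (hT : 0 < T)
    (tn : ℕ → Set.Icc (0:ℝ) T) (ωn : ℕ → PathSp m T)
    (t : Set.Icc (0:ℝ) T) (ω : PathSp m T) :
    (Tendsto (fun n => ((tn n : ℝ))) atTop (nhds (t : ℝ)) ∧
      Tendsto (fun n =>
          bNorm (ev (ωn n) (tn n : ℝ) - ev ω (t : ℝ))
            (fun s => liftSnd (tn n) (ωn n) s - liftSnd t ω s))
        atTop (nhds 0)) ↔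
    Tendsto (fun n => dBmetric (tn n, ωn n) (t, ω)) atTop (nhds 0) := by
  have hT0 : (0:ℝ) ≤ T := hT.le
  let x0 : ℕ → Em m := fun n => ev (ωn n) (tn n : ℝ) - ev ω (t : ℝ)
  let hf : ℕ → ℝ → Em m := fun n s => liftSnd (tn n) (ωn n) s - liftSnd t ω s
  let A : ℕ → ℝ := fun n => |(tn n : ℝ) - (t : ℝ)|
  let a : ℕ → ℝ := fun n => ‖x0 n‖
  let q : ℕ → ℝ := fun n =>
    ∫ s in Set.Iio (0:ℝ), ‖Real.exp s • x0 n + S14.Jh (hf n) s‖^2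
  let j : ℕ → ℝ := fun n => ∫ s in Set.Iio (0:ℝ), ‖S14.Jh (hf n) s‖^2
  let c : ℕ → ℝ := fun n => ‖S14.Hh (hf n) (-T)‖
  let d : ℕ → ℝ := fun n => ∫ s in (-T)..(0:ℝ), ‖S14.Hh (hf n) s‖^2
  have Nn : ∀ n, S14.Nice T (hf n) := fun n => S14.nice_hfun hT0 (tn n) t (ωn n) ω
  have hbn : ∀ n, bNorm (ev (ωn n) (tn n : ℝ) - ev ω (t : ℝ))
      (fun s => liftSnd (tn n) (ωn n) s - liftSnd t ω s)
      = Real.sqrt (a n ^ 2 + q n) := fun n => rfl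
  have hdB : ∀ n, dBmetric (tn n, ωn n) (t, ω) = A n + a n + c n + Real.sqrt (d n) :=
    fun n => S14.dB_expand hT0 (tn n) t (ωn n) ω
  have key1 : ∀ n, q n ≤ a n ^ 2 + 2 * j n := fun n => by
    obtain ⟨M, hM0, hM⟩ := (Nn n).bdd
    exact S14.ineq1 hT0 (Nn n) hM (x0 n)
  have key2 : ∀ n, j n ≤ a n ^ 2 + 2 * q n := fun n => by
    obtain ⟨M, hM0, hM⟩ := (Nn n).bdd
    exact S14.ineq2 hT0 (Nn n) hM (x0 n)
  have keyd : ∀ n, d n ≤ (2+2*T^2) * j n := fun n => by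
    obtain ⟨M, hM0, hM⟩ := (Nn n).bdd
    exact S14.ineq_d hT0 (Nn n) hM
  have keyc : ∀ n, c n ^ 2 ≤ (4+2*T) * j n := fun n => by
    obtain ⟨M, hM0, hM⟩ := (Nn n).bdd
    exact S14.ineq_c hT0 (Nn n) hM
  have keyj : ∀ n, j n ≤ (2+T+2*T^2) * d n + c n ^ 2 := fun n => by
    obtain ⟨M, hM0, hM⟩ := (Nn n).bdd
    exact S14.ineq_j hT0 (Nn n) hM
  have hA0 : ∀ n, 0 ≤ A n := fun n => abs_nonneg _
  have ha0 : ∀ n, 0 ≤ a n := fun n => norm_nonneg _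
  have hc0 : ∀ n, 0 ≤ c n := fun n => norm_nonneg _
  have hq0 : ∀ n, 0 ≤ q n := fun n => S14.q_nonneg (h := hf n) (x0 n)
  have hj0 : ∀ n, 0 ≤ j n := fun n => S14.j_nonneg (h := hf n)
  have hd0 : ∀ n, 0 ≤ d n := fun n => S14.d_nonneg (h := hf n) hT0
  constructor
  · rintro ⟨h1, h2⟩
    have hA' : Tendsto A atTop (nhds 0) := by
      have h := (h1.sub_const (t:ℝ)).abs
      rw [sub_self, abs_zero] at h
      exact h
    have h2' : Tendsto (fun n => Real.sqrt (a n ^ 2 + q n)) atTop (nhds 0) :=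
      h2.congr hbn
    have hs : Tendsto (fun n => a n ^ 2 + q n) atTop (nhds 0) := by
      have hmul := h2'.mul h2'
      rw [mul_zero] at hmul
      exact hmul.congr fun n =>
        Real.mul_self_sqrt (add_nonneg (sq_nonneg _) (hq0 n))
    have ha' : Tendsto a atTop (nhds 0) := by
      refine squeeze_zero ha0 (fun n => ?_) h2'
      exact (Real.le_sqrt (ha0 n) (add_nonneg (sq_nonneg _) (hq0 n))).mpr
        (by linarith [hq0 n])
    have hq' : Tendsto q atTop (nhds 0) :=
      squeeze_zero hq0 (fun n => by linarith [sq_nonneg (a n)]) hs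
    have hj' : Tendsto j atTop (nhds 0) := by
      refine squeeze_zero hj0 key2 ?_
      have hpow := ha'.pow 2
      rw [show ((0:ℝ)^2) = 0 by norm_num] at hpow
      have := hpow.add (hq'.const_mul 2)
      simpa using this
    have hd' : Tendsto d atTop (nhds 0) := by
      refine squeeze_zero hd0 keyd ?_
      have := hj'.const_mul (2+2*T^2)
      simpa using this
    have hsd : Tendsto (fun n => Real.sqrt (d n)) atTop (nhds 0) := by
      have := hd'.sqrt
      rwa [Real.sqrt_zero] at this
    have hc2 : Tendsto (fun n => c n ^ 2) atTop (nhds 0) := by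
      refine squeeze_zero (fun n => sq_nonneg _) keyc ?_
      have := hj'.const_mul (4+2*T)
      simpa using this
    have hc' : Tendsto c atTop (nhds 0) := by
      have := hc2.sqrt
      rw [Real.sqrt_zero] at this
      exact this.congr fun n => Real.sqrt_sq (hc0 n)
    have htot := ((hA'.add ha').add hc').add hsd
    rw [show ((0:ℝ)+0+0+0) = 0 by norm_num] at htot
    exact htot.congr fun n => (hdB n).symm
  · intro hdb
    have hdb' : Tendsto (fun n => A n + a n + c n + Real.sqrt (d n)) atTop (nhds 0) :=
      hdb.congr hdB
    have hsd0 : ∀ n, 0 ≤ Real.sqrt (d n) := fun n => Real.sqrt_nonneg _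
    have hA' : Tendsto A atTop (nhds 0) :=
      squeeze_zero hA0 (fun n => by linarith [ha0 n, hc0 n, hsd0 n]) hdb'
    have ha' : Tendsto a atTop (nhds 0) :=
      squeeze_zero ha0 (fun n => by linarith [hA0 n, hc0 n, hsd0 n]) hdb'
    have hc' : Tendsto c atTop (nhds 0) :=
      squeeze_zero hc0 (fun n => by linarith [hA0 n, ha0 n, hsd0 n]) hdb'
    have hsd' : Tendsto (fun n => Real.sqrt (d n)) atTop (nhds 0) :=
      squeeze_zero hsd0 (fun n => by linarith [hA0 n, ha0 n, hc0 n]) hdb'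
    have hd' : Tendsto d atTop (nhds 0) := by
      have hmul := hsd'.mul hsd'
      rw [mul_zero] at hmul
      exact hmul.congr fun n => Real.mul_self_sqrt (hd0 n)
    have hc2 : Tendsto (fun n => c n ^ 2) atTop (nhds 0) := by
      have := hc'.pow 2
      rw [show ((0:ℝ)^2) = 0 by norm_num] at this
      exact this
    have hj' : Tendsto j atTop (nhds 0) := by
      refine squeeze_zero hj0 keyj ?_
      have := (hd'.const_mul (2+T+2*T^2)).add hc2
      simpa using this
    have hq' : Tendsto q atTop (nhds 0) := by
      refine squeeze_zero hq0 key1 ?_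
      have hpow := ha'.pow 2
      rw [show ((0:ℝ)^2) = 0 by norm_num] at hpow
      have := hpow.add (hj'.const_mul 2)
      simpa using this
    constructor
    · have habs : Tendsto (fun n => (tn n : ℝ) - (t:ℝ)) atTop (nhds 0) :=
        (tendsto_zero_iff_abs_tendsto_zero _).mpr hA'
      have := habs.add_const (t:ℝ)
      rw [zero_add] at this
      exact this.congr fun n => by ring
    · have hs : Tendsto (fun n => a n ^ 2 + q n) atTop (nhds 0) := by
        have hpow := ha'.pow 2
        rw [show ((0:ℝ)^2) = 0 by norm_num] at hpow
        have := hpow.add hq'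
        simpa using this
      have := hs.sqrt
      rw [Real.sqrt_zero] at this
      exact this.congr fun n => (hbn n).symm
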